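/- Let X be a countably infinite set and p a discrete probability measure on X with p(x) > 0 for all x ∈ X. Let B ⊆ X^{ℤ≥1} be the set of sequences (y_i) for which there exists a function f : X → ℝ≥0 such that the sum ∑_{x∈X} f(x)·p(x) converges, but the limit lim_{n→∞} (1/n)∑_{i=1}^n f(y_i) does not exist in ℝ. Then B has measure 1 with respect to the product measure on X^{ℤ≥1} induced by p. -/

import Mathlib

open MeasureTheory Filter Topology

namespace Statement0Aux

variable {X : Type} [MeasurableSpace X] [DiscreteMeasurableSpace X] [Countable X] [Infinite X]

lemma exists_small_atom (μ : Measure X) [IsProbabilityMeasure μ] {ε : ℝ} (hε : 0 < ε) :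
    ∃ x : X, (μ {x}).toReal < ε := by
  by_contra h
  push_neg at h
  obtain ⟨n, hn⟩ := exists_nat_gt (1 / ε)
  set s : Finset X := (Finset.range (n + 1)).map (Infinite.natEmbedding X) with hs
  have hcard : s.card = n + 1 := by simp [hs]
  have hsum : μ (s : Set X) = ∑ x ∈ s, μ {x} := by
    rw [← Set.biUnion_of_singleton (s : Set X)]
    exact measure_biUnion_finset (fun x _ y _ hxy => by simp [hxy])
      (fun x _ => measurableSet_singleton x)
  have hle1 : (μ (s : Set X)).toReal ≤ 1 := by
    have := prob_le_one (μ := μ) (s := (s : Set X))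
    exact ENNReal.toReal_le_of_le_ofReal one_pos.le (by simpa using this)
  have htr : (μ (s : Set X)).toReal = ∑ x ∈ s, (μ {x}).toReal := by
    rw [hsum, ENNReal.toReal_sum]
    exact fun x _ => measure_ne_top μ _
  have hlb : (n + 1 : ℝ) * ε ≤ ∑ x ∈ s, (μ {x}).toReal := by
    calc (n + 1 : ℝ) * ε = ∑ _x ∈ s, ε := by rw [Finset.sum_const, hcard]; ring
    _ ≤ ∑ x ∈ s, (μ {x}).toReal := Finset.sum_le_sum (fun x _ => h x)
  have h1 : (1 : ℝ) < n * ε := (div_lt_iff₀ hε).mp hn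
  nlinarith [htr ▸ hle1]

noncomputable section

variable (μ : Measure X) [IsProbabilityMeasure μ]

/-- real measure of an atom -/
def alpha (x : X) : ℝ := (μ {x}).toReal

/-- the level scaling constants -/
def lam (k : ℕ) : ℝ := (k + 1) * 2 ^ (k + 2)

/-- level of trial t -/
def lvl (t : ℕ) : ℕ := t.unpair.1

def pickAtom (ε : ℝ) : X :=
  if h : 0 < ε then (exists_small_atom μ h).choose else Classical.arbitrary X

lemma pickAtom_lt {ε : ℝ} (hε : 0 < ε) : alpha μ (pickAtom μ ε) < ε := by
  rw [pickAtom, dif_pos hε]; exact (exists_small_atom μ hε).choose_spec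

/-- window length for trial t using atom x -/
def wl (t : ℕ) (x : X) : ℕ := ⌈1 / (2 * lam (lvl t) * alpha μ x)⌉₊

/-- state: (window start, atom) of trial t -/
def st : ℕ → ℕ × X
  | 0 => (1, pickAtom μ (1 / (2 * lam (lvl 0))))
  | t + 1 =>
    let p := st t
    let b1 := p.1 + wl μ t p.2
    (b1, pickAtom μ (min (alpha μ p.2) (1 / (2 * lam (lvl (t + 1)) * b1))))

def bb (t : ℕ) : ℕ := (st μ t).1
def aa (t : ℕ) : X := (st μ t).2
def ww (t : ℕ) : ℕ := wl μ t (aa μ t)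

variable (hpos : ∀ x : X, 0 < μ {x})

lemma lam_pos (k : ℕ) : 0 < lam k := by unfold lam; positivity

lemma lam_ge_four (k : ℕ) : 4 ≤ lam k := by
  have h1 : (1 : ℝ) ≤ (k + 1 : ℝ) := by
    have : (0:ℝ) ≤ (k:ℝ) := Nat.cast_nonneg k
    linarith
  have h2 : (4 : ℝ) ≤ 2 ^ (k + 2) := by
    calc (4 : ℝ) = 2 ^ 2 := by norm_num
    _ ≤ 2 ^ (k + 2) := by
      apply pow_le_pow_right₀ one_le_two; omega
  calc (4:ℝ) = 1 * 4 := by ring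
  _ ≤ (k + 1 : ℝ) * 2 ^ (k + 2) := by
    apply mul_le_mul h1 h2 (by norm_num) (by positivity)
  _ = lam k := rfl


include hpos in
lemma alpha_pos (x : X) : 0 < alpha μ x :=
  ENNReal.toReal_pos (hpos x).ne' (measure_ne_top μ _)

lemma bb_zero : bb μ 0 = 1 := rfl

lemma bb_succ (t : ℕ) : bb μ (t + 1) = bb μ t + ww μ t := rfl

include hpos in
lemma ww_pos (t : ℕ) : 1 ≤ ww μ t := by
  have h : 0 < 1 / (2 * lam (lvl t) * alpha μ (aa μ t)) := by
    have := alpha_pos μ hpos (aa μ t); have := lam_pos (lvl t); positivity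
  exact Nat.ceil_pos.mpr h

lemma bb_pos (t : ℕ) : 1 ≤ bb μ t := by
  induction t with
  | zero => rfl
  | succ t ih => rw [bb_succ]; omega

include hpos in
lemma aa_bound (t : ℕ) :
    alpha μ (aa μ t) < 1 / (2 * lam (lvl t) * (bb μ t : ℝ)) := by
  cases t with
  | zero =>
    have h : (0:ℝ) < 1 / (2 * lam (lvl 0)) := by have := lam_pos (lvl 0); positivity
    have := pickAtom_lt μ h
    simpa [aa, st, bb] using this
  | succ t =>
    have hb1 : (1:ℝ) ≤ (bb μ (t+1) : ℝ) := by exact_mod_cast bb_pos μ (t+1)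
    have hε : (0:ℝ) < min (alpha μ (aa μ t)) (1 / (2 * lam (lvl (t+1)) * (bb μ (t+1) : ℝ))) := by
      apply lt_min (alpha_pos μ hpos _)
      have := lam_pos (lvl (t+1)); positivity
    have h := pickAtom_lt μ hε
    have : aa μ (t+1) = pickAtom μ
        (min (alpha μ (aa μ t)) (1 / (2 * lam (lvl (t+1)) * (bb μ (t+1) : ℝ)))) := by
      show (st μ (t+1)).2 = _
      rw [st]
      rfl
    rw [this]
    exact lt_of_lt_of_le h (min_le_right _ _)

include hpos in
lemma aa_dec (t : ℕ) : alpha μ (aa μ (t + 1)) < alpha μ (aa μ t) := by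
  have hb1 : (1:ℝ) ≤ (bb μ (t+1) : ℝ) := by exact_mod_cast bb_pos μ (t+1)
  have hε : (0:ℝ) < min (alpha μ (aa μ t)) (1 / (2 * lam (lvl (t+1)) * (bb μ (t+1) : ℝ))) := by
    apply lt_min (alpha_pos μ hpos _)
    have := lam_pos (lvl (t+1)); positivity
  have h := pickAtom_lt μ hε
  have heq : aa μ (t+1) = pickAtom μ
      (min (alpha μ (aa μ t)) (1 / (2 * lam (lvl (t+1)) * (bb μ (t+1) : ℝ)))) := by
    show (st μ (t+1)).2 = _
    rw [st]
    rfl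
  rw [heq]
  exact lt_of_lt_of_le h (min_le_left _ _)

include hpos in
lemma aa_inj : Function.Injective (aa μ) := by
  have hanti : StrictAnti (fun t => alpha μ (aa μ t)) :=
    strictAnti_nat_of_succ_lt (fun t => aa_dec μ hpos t)
  intro s t hst
  by_contra hne
  rcases Nat.lt_or_ge s t with h | h
  · exact absurd (congrArg (alpha μ) hst) (hanti h).ne'
  · have h' : t < s := by omega
    exact absurd (congrArg (alpha μ) hst) (hanti h').ne

include hpos in
lemma ww_lower (t : ℕ) : 1 / (2 * lam (lvl t)) ≤ (ww μ t : ℝ) * alpha μ (aa μ t) := by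
  have ha := alpha_pos μ hpos (aa μ t)
  have hl := lam_pos (lvl t)
  have hceil : 1 / (2 * lam (lvl t) * alpha μ (aa μ t)) ≤ (ww μ t : ℝ) := Nat.le_ceil _
  calc 1 / (2 * lam (lvl t)) = (1 / (2 * lam (lvl t) * alpha μ (aa μ t))) * alpha μ (aa μ t) := by
        field_simp
  _ ≤ (ww μ t : ℝ) * alpha μ (aa μ t) := by
        apply mul_le_mul_of_nonneg_right hceil ha.le

include hpos in
lemma alpha_le (t : ℕ) : alpha μ (aa μ t) ≤ 1 / (2 * lam (lvl t)) := by
  have h := aa_bound μ hpos t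
  have hb1 : (1:ℝ) ≤ (bb μ t : ℝ) := by exact_mod_cast bb_pos μ t
  have hl := lam_pos (lvl t)
  have : 1 / (2 * lam (lvl t) * (bb μ t : ℝ)) ≤ 1 / (2 * lam (lvl t)) := by
    apply one_div_le_one_div_of_le (by positivity)
    nlinarith
  linarith

include hpos in
lemma window_bound (t : ℕ) :
    ((bb μ t + ww μ t : ℕ) : ℝ) * alpha μ (aa μ t) ≤ 3 / (2 * lam (lvl t)) := by
  have ha := alpha_pos μ hpos (aa μ t)
  have hl := lam_pos (lvl t)
  have hab := aa_bound μ hpos t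
  have hbpos : (0:ℝ) < (bb μ t : ℝ) := by exact_mod_cast bb_pos μ t
  have h1 : (bb μ t : ℝ) * alpha μ (aa μ t) ≤ 1 / (2 * lam (lvl t)) := by
    have := mul_le_mul_of_nonneg_left hab.le hbpos.le
    calc (bb μ t : ℝ) * alpha μ (aa μ t)
        ≤ (bb μ t : ℝ) * (1 / (2 * lam (lvl t) * (bb μ t : ℝ))) := this
    _ = 1 / (2 * lam (lvl t)) := by field_simp
  have h2 : (ww μ t : ℝ) * alpha μ (aa μ t) ≤ 1 / (2 * lam (lvl t)) + alpha μ (aa μ t) := by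
    have hc : (ww μ t : ℝ) < 1 / (2 * lam (lvl t) * alpha μ (aa μ t)) + 1 :=
      Nat.ceil_lt_add_one (by positivity)
    have := mul_le_mul_of_nonneg_right hc.le ha.le
    calc (ww μ t : ℝ) * alpha μ (aa μ t)
        ≤ (1 / (2 * lam (lvl t) * alpha μ (aa μ t)) + 1) * alpha μ (aa μ t) := this
    _ = 1 / (2 * lam (lvl t)) + alpha μ (aa μ t) := by field_simp
  have h3 := alpha_le μ hpos t
  push_cast
  have hexp : ((bb μ t : ℝ) + (ww μ t : ℝ)) * alpha μ (aa μ t)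
      = (bb μ t : ℝ) * alpha μ (aa μ t) + (ww μ t : ℝ) * alpha μ (aa μ t) := by ring
  have h32 : 3 / (2 * lam (lvl t)) = 1 / (2 * lam (lvl t)) + 1 / (2 * lam (lvl t)) + 1 / (2 * lam (lvl t)) := by ring
  linarith

include hpos in
lemma alpha_lt_one (t : ℕ) : alpha μ (aa μ t) < 1 := by
  have h := alpha_le μ hpos t
  have h4 := lam_ge_four (lvl t)
  have : 1 / (2 * lam (lvl t)) ≤ 1 / 8 := by
    apply one_div_le_one_div_of_le <;> linarith
  linarith

include hpos in
lemma bb_strictMono : StrictMono (bb μ) := by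
  apply strictMono_nat_of_lt_succ
  intro t
  have := ww_pos μ hpos t
  rw [bb_succ]
  omega

include hpos in
lemma bb_ge (t : ℕ) : t + 1 ≤ bb μ t := by
  induction t with
  | zero => rfl
  | succ t ih =>
    have := ww_pos μ hpos t
    rw [bb_succ]
    omega

/-- the trial whose window contains time i -/
def tOf (i : ℕ) : ℕ := Nat.findGreatest (fun t => bb μ t ≤ i) i

include hpos in
lemma tOf_eq {t i : ℕ} (h1 : bb μ t ≤ i) (h2 : i < bb μ (t + 1)) : tOf μ i = t := by
  classical
  have hti : t ≤ i := by have := bb_ge μ hpos t; omega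
  have hge : t ≤ tOf μ i := Nat.le_findGreatest hti h1
  have hle : tOf μ i ≤ t := by
    by_contra hgt
    push_neg at hgt
    have hspec : bb μ (tOf μ i) ≤ i :=
      Nat.findGreatest_spec (P := fun t => bb μ t ≤ i) hti h1
    have : bb μ (t + 1) ≤ bb μ (tOf μ i) := (bb_strictMono μ hpos).monotone (by omega)
    omega
  omega

lemma bern {a : ℝ} (h0 : 0 < a) (h1 : a < 1) (w : ℕ) : (1 - a) ^ w ≤ 1 / (1 + w * a) := by
  have h1a : (0:ℝ) < 1 - a := by linarith
  have hβ : (0:ℝ) ≤ a / (1 - a) := by positivity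
  have key : 1 + (w:ℝ) * (a / (1 - a)) ≤ (1 + a / (1 - a)) ^ w :=
    one_add_mul_le_pow (by linarith) w
  have heq : 1 + a / (1 - a) = 1 / (1 - a) := by field_simp; ring
  have h2 : 1 + (w:ℝ) * a ≤ (1 / (1 - a)) ^ w := by
    have hmul : (w:ℝ) * a ≤ (w:ℝ) * (a / (1 - a)) := by
      apply mul_le_mul_of_nonneg_left _ (Nat.cast_nonneg w)
      rw [le_div_iff₀ h1a]; nlinarith
    calc 1 + (w:ℝ) * a ≤ 1 + (w:ℝ) * (a / (1 - a)) := by linarith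
    _ ≤ _ := heq ▸ key
  have hpow : (0:ℝ) < (1 - a) ^ w := by positivity
  have hwa : (0:ℝ) < 1 + w * a := by positivity
  rw [le_div_iff₀ hwa]
  rw [one_div, inv_pow] at h2
  calc (1 - a) ^ w * (1 + w * a) ≤ (1 - a) ^ w * ((1 - a) ^ w)⁻¹ :=
        mul_le_mul_of_nonneg_left h2 hpow.le
  _ = 1 := mul_inv_cancel₀ hpow.ne'

include hpos in
lemma trial_factor (t : ℕ) :
    (μ ({aa μ t}ᶜ)) ^ (ww μ t) ≤ ENNReal.ofReal (1 / (1 + 1 / (2 * lam (lvl t)))) := by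
  set x := aa μ t
  set a := alpha μ x with ha
  have ha0 : 0 < a := alpha_pos μ hpos x
  have ha1 : a < 1 := alpha_lt_one μ hpos t
  have hcompl : μ ({x}ᶜ) = ENNReal.ofReal (1 - a) := by
    rw [prob_compl_eq_one_sub (measurableSet_singleton x)]
    have hx : μ {x} = ENNReal.ofReal a := (ENNReal.ofReal_toReal (measure_ne_top μ _)).symm
    rw [hx, ← ENNReal.ofReal_one, ← ENNReal.ofReal_sub _ ha0.le]
  rw [hcompl, ← ENNReal.ofReal_pow (by linarith)]
  apply ENNReal.ofReal_le_ofReal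
  calc (1 - a) ^ (ww μ t) ≤ 1 / (1 + (ww μ t : ℝ) * a) := bern ha0 ha1 _
  _ ≤ 1 / (1 + 1 / (2 * lam (lvl t))) := by
      apply one_div_le_one_div_of_le
      · have := lam_pos (lvl t); positivity
      · have := ww_lower μ hpos t; linarith

include hpos in
lemma windows_disjoint {t t' : ℕ} (h : t ≠ t') :
    Disjoint (Finset.Ico (bb μ t) (bb μ t + ww μ t))
      (Finset.Ico (bb μ t') (bb μ t' + ww μ t')) := by
  have key : ∀ s s' : ℕ, s < s' →
      Disjoint (Finset.Ico (bb μ s) (bb μ s + ww μ s))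
        (Finset.Ico (bb μ s') (bb μ s' + ww μ s')) := by
    intro s s' hss
    rw [Finset.disjoint_left]
    intro i hi hi'
    rw [Finset.mem_Ico] at hi hi'
    have h1 : bb μ s + ww μ s = bb μ (s + 1) := (bb_succ μ s).symm
    have h2 : bb μ (s + 1) ≤ bb μ s' := (bb_strictMono μ hpos).monotone (by omega)
    omega
  rcases Nat.lt_or_ge t t' with h' | h'
  · exact key t t' h'
  · exact (key t' t (by omega)).symm

lemma lvl_pair (k m : ℕ) : lvl (Nat.pair k m) = k := by simp [lvl, Nat.unpair_pair]

include hpos in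
lemma null_k (π : Measure (ℕ → X)) [IsProbabilityMeasure π]
    (hπ : ∀ (s : Finset ℕ) (B : ℕ → Set X),
      π {y | ∀ i ∈ s, y i ∈ B i} = ∏ i ∈ s, μ (B i)) (k : ℕ) :
    π (⋂ (m : ℕ), ⋂ n ∈ Set.Ico (bb μ (Nat.pair k m)) (bb μ (Nat.pair k m) + ww μ (Nat.pair k m)),
        {y : ℕ → X | y n ≠ aa μ (Nat.pair k m)}) = 0 := by
  classical
  have hlamp := lam_pos k
  set c : ℝ := 1 / (1 + 1 / (2 * lam k)) with hc
  have hc1 : c < 1 := by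
    rw [hc, div_lt_one (by positivity)]
    have : (0:ℝ) < 1 / (2 * lam k) := by positivity
    linarith
  set T : ℕ → ℕ := fun m => Nat.pair k m with hT
  set N := ⋂ (m : ℕ), ⋂ n ∈ Set.Ico (bb μ (T m)) (bb μ (T m) + ww μ (T m)),
      {y : ℕ → X | y n ≠ aa μ (T m)} with hN
  have bound : ∀ M : ℕ, π N ≤ ENNReal.ofReal c ^ M := by
    intro M
    set s : Finset ℕ := (Finset.range M).biUnion
      (fun m => Finset.Ico (bb μ (T m)) (bb μ (T m) + ww μ (T m))) with hs
    set B : ℕ → Set X := fun i => {aa μ (tOf μ i)}ᶜ with hB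
    have htof : ∀ m, ∀ i ∈ Finset.Ico (bb μ (T m)) (bb μ (T m) + ww μ (T m)),
        tOf μ i = T m := by
      intro m i hi
      rw [Finset.mem_Ico] at hi
      exact tOf_eq μ hpos hi.1 (by rw [bb_succ]; exact hi.2)
    have hsub : N ⊆ {y | ∀ i ∈ s, y i ∈ B i} := by
      intro y hy i hi
      rw [hs, Finset.mem_biUnion] at hi
      obtain ⟨m, hm, hiIco⟩ := hi
      have h1 : y ∈ ⋂ n ∈ Set.Ico (bb μ (T m)) (bb μ (T m) + ww μ (T m)),
          {y : ℕ → X | y n ≠ aa μ (T m)} := Set.mem_iInter.mp hy m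
      have h2 : y i ≠ aa μ (T m) := by
        have := Set.mem_iInter₂.mp h1 i (by
          rw [Finset.mem_Ico] at hiIco
          exact Set.mem_Ico.mpr hiIco)
        exact this
      show y i ∈ B i
      rw [hB]
      simp only [Set.mem_compl_iff, Set.mem_singleton_iff]
      rw [htof m i hiIco]
      exact h2
    have hdisj : (↑(Finset.range M) : Set ℕ).PairwiseDisjoint
        (fun m => Finset.Ico (bb μ (T m)) (bb μ (T m) + ww μ (T m))) := by
      intro m _ m' _ hmm
      apply windows_disjoint μ hpos
      intro hTT
      exact hmm (by
        have := congrArg (fun t => Nat.unpair t) hTT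
        simpa [hT, Nat.unpair_pair] using this)
    calc π N ≤ π {y | ∀ i ∈ s, y i ∈ B i} := measure_mono hsub
    _ = ∏ i ∈ s, μ (B i) := hπ s B
    _ = ∏ m ∈ Finset.range M, ∏ i ∈ Finset.Ico (bb μ (T m)) (bb μ (T m) + ww μ (T m)),
          μ (B i) := Finset.prod_biUnion hdisj
    _ ≤ ∏ _m ∈ Finset.range M, ENNReal.ofReal c := by
        apply Finset.prod_le_prod'
        intro m _
        have hinner : ∏ i ∈ Finset.Ico (bb μ (T m)) (bb μ (T m) + ww μ (T m)), μ (B i)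
            = (μ ({aa μ (T m)}ᶜ)) ^ (ww μ (T m)) := by
          have hcg : ∀ i ∈ Finset.Ico (bb μ (T m)) (bb μ (T m) + ww μ (T m)),
              μ (B i) = μ ({aa μ (T m)}ᶜ) := by
            intro i hi
            show μ ({aa μ (tOf μ i)}ᶜ) = _
            rw [htof m i hi]
          rw [Finset.prod_congr rfl hcg]
          rw [Finset.prod_const, Nat.card_Ico]
          congr 1
          omega
        rw [hinner]
        have := trial_factor μ hpos (T m)
        rwa [hT, lvl_pair k m] at this
    _ = ENNReal.ofReal c ^ M := by rw [Finset.prod_const, Finset.card_range]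
  have hten : Tendsto (fun M : ℕ => ENNReal.ofReal c ^ M) atTop (𝓝 0) :=
    ENNReal.tendsto_pow_atTop_nhds_zero_of_lt_one (ENNReal.ofReal_lt_one.mpr hc1)
  exact le_antisymm (le_of_tendsto_of_tendsto' tendsto_const_nhds hten bound) (zero_le)

end

end Statement0Aux


/-- Let `X` be a countably infinite set and `p` (here `μ`) a discrete
probability measure on `X` with `p(x) > 0` for all `x`.  Let `π` be the induced product
probability measure on the sequence space `X^{ℤ≥1}` (modelled as `ℕ → X`, characterised by
its finite-dimensional marginals being products of `μ`).  Then the set `B` of sequences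
`(y_i)` for which there exists `f : X → ℝ≥0` with `∑ f(x) p(x)` convergent but
`lim (1/n) ∑_{i=1}^n f(y_i)` not existing in `ℝ` has `π`-measure `1`. -/
theorem statement0 (X : Type) [MeasurableSpace X] [DiscreteMeasurableSpace X]
    [Countable X] [Infinite X]
    (μ : Measure X) [IsProbabilityMeasure μ] (hpos : ∀ x : X, 0 < μ {x})
    (π : Measure (ℕ → X)) [IsProbabilityMeasure π]
    (hπ : ∀ (s : Finset ℕ) (B : ℕ → Set X),
      π {y | ∀ i ∈ s, y i ∈ B i} = ∏ i ∈ s, μ (B i)) :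
    π {y : ℕ → X | ∃ f : X → ℝ, (∀ x, 0 ≤ f x) ∧
        Summable (fun x => f x * (μ {x}).toReal) ∧
        ¬ ∃ L : ℝ, Tendsto (fun n : ℕ => (∑ i ∈ Finset.range n, f (y i)) / n)
            atTop (𝓝 L)} = 1 := by
  classical
  open Statement0Aux in
  set NN : ℕ → Set (ℕ → X) := fun k =>
    ⋂ (m : ℕ), ⋂ n ∈ Set.Ico (bb μ (Nat.pair k m)) (bb μ (Nat.pair k m) + ww μ (Nat.pair k m)),
      {y : ℕ → X | y n ≠ aa μ (Nat.pair k m)} with hNN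
  have hnull : ∀ k, π (NN k) = 0 := fun k => Statement0Aux.null_k μ hpos π hπ k
  have hUnull : π (⋃ k, NN k) = 0 := measure_iUnion_null hnull
  have hmeasNN : ∀ k, MeasurableSet (NN k) := by
    intro k
    apply MeasurableSet.iInter; intro m
    apply MeasurableSet.iInter; intro n
    apply MeasurableSet.iInter; intro _
    have heq : {y : ℕ → X | y n ≠ Statement0Aux.aa μ (Nat.pair k m)}
        = (fun y : ℕ → X => y n) ⁻¹' ({Statement0Aux.aa μ (Nat.pair k m)}ᶜ) := rfl
    rw [heq]
    exact (measurableSet_singleton _).compl.preimage (measurable_pi_apply n)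
  have hcompl : π ((⋃ k, NN k)ᶜ) = 1 := by
    rw [prob_compl_eq_one_sub (MeasurableSet.iUnion hmeasNN), hUnull]
    simp
  set Target : Set (ℕ → X) := {y : ℕ → X | ∃ f : X → ℝ, (∀ x, 0 ≤ f x) ∧
        Summable (fun x => f x * (μ {x}).toReal) ∧
        ¬ ∃ L : ℝ, Tendsto (fun n : ℕ => (∑ i ∈ Finset.range n, f (y i)) / n)
            atTop (𝓝 L)} with hTarget
  have hsub : (⋃ k, NN k)ᶜ ⊆ Target := by
    intro y hy
    simp only [Set.mem_compl_iff, Set.mem_iUnion, not_exists] at hy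
    have hex : ∀ k : ℕ, ∃ q : ℕ × ℕ, Statement0Aux.lvl q.1 = k ∧
        Statement0Aux.bb μ q.1 ≤ q.2 ∧
        q.2 < Statement0Aux.bb μ q.1 + Statement0Aux.ww μ q.1 ∧
        y q.2 = Statement0Aux.aa μ q.1 := by
      intro k
      have hk : ¬ (∀ m : ℕ, ∀ n ∈ Set.Ico (Statement0Aux.bb μ (Nat.pair k m))
          (Statement0Aux.bb μ (Nat.pair k m) + Statement0Aux.ww μ (Nat.pair k m)),
          y n ≠ Statement0Aux.aa μ (Nat.pair k m)) := by
        intro hall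
        exact hy k (by
          rw [hNN]
          exact Set.mem_iInter.mpr (fun m => Set.mem_iInter₂.mpr (fun n hn => hall m n hn)))
      push_neg at hk
      obtain ⟨m, n, hn, hyn⟩ := hk
      rw [Set.mem_Ico] at hn
      exact ⟨(Nat.pair k m, n), Statement0Aux.lvl_pair k m, hn.1, hn.2, hyn⟩
    choose q hq1 hq2 hq3 hq4 using hex
    set e : ℕ → X := fun k => Statement0Aux.aa μ (q k).1 with he
    have einj : Function.Injective e := by
      intro k k' hkk
      have h1 : (q k).1 = (q k').1 := Statement0Aux.aa_inj μ hpos hkk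
      rw [← hq1 k, ← hq1 k', h1]
    set g : ℕ → ℝ := fun k => (1/2 : ℝ)^k / Statement0Aux.alpha μ (e k) with hg
    set f : X → ℝ := Function.extend e g 0 with hf
    have hgpos : ∀ k, 0 < g k := by
      intro k
      have := Statement0Aux.alpha_pos μ hpos (e k)
      rw [hg]
      positivity
    have hnonneg : ∀ x, 0 ≤ f x := by
      intro x
      rw [hf, Function.extend_def]
      split
      · exact (hgpos _).le
      · exact le_refl 0
    have hfek : ∀ k, f (e k) = g k := fun k => by rw [hf, einj.extend_apply]
    refine Set.mem_setOf_eq ▸ ⟨f, hnonneg, ?_, ?_⟩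
    · have hfun : (fun x => f x * (μ {x}).toReal)
          = Function.extend e (fun k => (1/2 : ℝ)^k) 0 := by
        funext x
        by_cases hx : ∃ k, e k = x
        · obtain ⟨k, rfl⟩ := hx
          rw [einj.extend_apply, hfek k, hg]
          have hα := Statement0Aux.alpha_pos μ hpos (e k)
          show (1/2 : ℝ)^k / Statement0Aux.alpha μ (e k) * Statement0Aux.alpha μ (e k) = _
          field_simp
        · rw [hf, Function.extend_apply' _ _ _ hx, Function.extend_apply' _ _ _ hx]
          show (0 : X → ℝ) x * _ = (0 : X → ℝ) x
          simp
      rw [hfun, summable_extend_zero einj]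
      exact summable_geometric_of_lt_one (by norm_num) (by norm_num)
    · rintro ⟨L, hL⟩
      obtain ⟨C, hC⟩ := hL.bddAbove_range
      obtain ⟨k, hkC⟩ := exists_nat_gt C
      have hα : 0 < Statement0Aux.alpha μ (e k) := Statement0Aux.alpha_pos μ hpos _
      set n : ℕ := (q k).2 with hn
      have hwb : ((Statement0Aux.bb μ (q k).1 + Statement0Aux.ww μ (q k).1 : ℕ) : ℝ)
          * Statement0Aux.alpha μ (e k) ≤ 3 / (2 * Statement0Aux.lam k) := by
        have := Statement0Aux.window_bound μ hpos (q k).1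
        rwa [hq1 k] at this
      have hn1 : ((n + 1 : ℕ) : ℝ) * Statement0Aux.alpha μ (e k)
          ≤ 3 / (2 * Statement0Aux.lam k) := by
        have hle : ((n + 1 : ℕ) : ℝ)
            ≤ ((Statement0Aux.bb μ (q k).1 + Statement0Aux.ww μ (q k).1 : ℕ) : ℝ) := by
          exact_mod_cast hq3 k
        exact le_trans (mul_le_mul_of_nonneg_right hle hα.le) hwb
      have hsum_ge : f (e k) ≤ ∑ i ∈ Finset.range (n + 1), f (y i) := by
        have hmem : n ∈ Finset.range (n + 1) := by simp
        have hone := Finset.single_le_sum (f := fun i => f (y i))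
          (fun i _ => hnonneg (y i)) hmem
        have hyy : f (y n) = f (e k) := by rw [hq4 k]
        linarith
      have hposn : (0 : ℝ) < ((n + 1 : ℕ) : ℝ) := by positivity
      have hseq : ((k : ℝ) + 1)
          ≤ (∑ i ∈ Finset.range (n + 1), f (y i)) / ((n + 1 : ℕ) : ℝ) := by
        have step1 : ((k : ℝ) + 1) ≤ f (e k) / ((n + 1 : ℕ) : ℝ) := by
          rw [hfek k, hg, div_div, le_div_iff₀ (by positivity)]
          have hstep : ((k : ℝ) + 1) * (Statement0Aux.alpha μ (e k) * ((n + 1 : ℕ) : ℝ))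
              ≤ ((k : ℝ) + 1) * (3 / (2 * Statement0Aux.lam k)) := by
            apply mul_le_mul_of_nonneg_left _ (by positivity)
            rw [mul_comm]
            exact hn1
          have heval : ((k : ℝ) + 1) * (3 / (2 * Statement0Aux.lam k)) ≤ (1/2 : ℝ)^k := by
            unfold Statement0Aux.lam
            have h2k : (0 : ℝ) < 2^k := by positivity
            have hk1 : (0 : ℝ) < (k : ℝ) + 1 := by positivity
            have hpow : (2 : ℝ)^(k + 2) = 4 * 2^k := by rw [pow_add]; ring
            rw [hpow, div_pow, one_pow]
            have hrw : ((k : ℝ) + 1) * (3 / (2 * (((k : ℝ) + 1) * (4 * 2^k)))) = 3 / (8 * 2^k) := by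
              field_simp
              ring
            rw [hrw, div_le_div_iff₀ (by positivity) (by positivity)]
            nlinarith [h2k]
          linarith
        calc ((k : ℝ) + 1) ≤ f (e k) / ((n + 1 : ℕ) : ℝ) := step1
        _ ≤ _ := by gcongr
      have hCk : (∑ i ∈ Finset.range (n + 1), f (y i)) / ((n + 1 : ℕ) : ℝ) ≤ C :=
        hC (Set.mem_range_self (n + 1))
      have : (k : ℝ) < (k : ℝ) + 1 := by linarith
      linarith
  have h1 : (1 : ENNReal) ≤ π Target := by
    rw [← hcompl]
    exact measure_mono hsub
  exact le_antisymm prob_le_one h1
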